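/- Let X be a set and d : X × X → ℝ a symmetric function satisfying the strong (bottleneck/ultrametric-type) triangle inequality d(a,b) ≤ max(d(a,c), d(c,b)) for all a,b,c ∈ X. Then for all points u, v, w, u', v', w' ∈ X, one has max{d(u,u'), d(u',v'), d(v',v)} + max{d(v,v'), d(v',w'), d(w',w)} ≥ d(v,v') + max{d(u,u'), d(u',w'), d(w',w)}. -/
import Mathlib

/-- For a symmetric function `d` satisfying the strong (bottleneck/ultrametric-type)
triangle inequality, the bottleneck distances satisfy the strengthened metric inequality. -/
theorem bottleneck_strengthened_triangle {X : Type*} (d : X × X → ℝ)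
    (hsymm : ∀ a b : X, d (a, b) = d (b, a))
    (htri : ∀ a b c : X, d (a, b) ≤ max (d (a, c)) (d (c, b))) :
    ∀ u v w u' v' w' : X,
      max (d (u, u')) (max (d (u', v')) (d (v', v))) +
        max (d (v, v')) (max (d (v', w')) (d (w', w))) ≥
      d (v, v') + max (d (u, u')) (max (d (u', w')) (d (w', w))) := by
  intro u v w u' v' w'
  set A := max (d (u, u')) (max (d (u', v')) (d (v', v))) with hA
  set B := max (d (v, v')) (max (d (v', w')) (d (w', w))) with hB
  have h1 : d (u', w') ≤ max (d (u', v')) (d (v', w')) := htri u' w' v'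
  have h2 : d (v, v') = d (v', v) := hsymm v v'
  have hdA : d (v, v') ≤ A := by rw [h2]; exact le_max_of_le_right (le_max_right _ _)
  have hdB : d (v, v') ≤ B := le_max_left _ _
  have hM : max (d (u, u')) (max (d (u', w')) (d (w', w))) ≤ max A B := by
    apply max_le
    · exact le_max_of_le_left (le_max_left _ _)
    · apply max_le
      · refine h1.trans (max_le ?_ ?_)
        · exact le_max_of_le_left (le_max_of_le_right (le_max_left _ _))
        · exact le_max_of_le_right (le_max_of_le_right (le_max_left _ _))
      · exact le_max_of_le_right (le_max_of_le_right (le_max_right _ _))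
  have hmin : d (v, v') ≤ min A B := le_min hdA hdB
  have := max_add_min A B
  have h3 : d (v, v') + max (d (u, u')) (max (d (u', w')) (d (w', w))) ≤ min A B + max A B := by
    exact add_le_add hmin hM
  linarith [min_add_max A B]
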